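/- Let H be a complex Hilbert space, P and Q orthogonal projections on H with ranges M and N, and Π := P_{M∩N} the orthogonal projection onto M ∩ N. Suppose A, W, W′ ∈ H satisfy A − P(A) = −W and A − Q(A) = −W′. Then (1 + Π − PQ)((1 − Π)A) = −(W + P(W′)) and (1 + Π − QP)((1 − Π)A) = −(W′ + Q(W)). Consequently, if in addition M + N is closed, then (1 − Π)A = −(1 + Π − PQ)⁻¹(W + P(W′)) = −(1 + Π − QP)⁻¹(W′ + Q(W)). -/
import Mathlib

lemma proj_fix {H : Type*} [NormedAddCommGroup H] [InnerProductSpace ℂ H]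
    {S : Submodule ℂ H} {P : H →L[ℂ] H}
    (h : ∀ x : H, P x ∈ S ∧ x - P x ∈ Sᗮ) {x : H} (hx : x ∈ S) : P x = x := by
  have h1 := (h x).2
  have h2 : x - P x ∈ S := S.sub_mem hx (h x).1
  have h3 : x - P x ∈ S ⊓ Sᗮ := ⟨h2, h1⟩
  rw [Submodule.inf_orthogonal_eq_bot, Submodule.mem_bot, sub_eq_zero] at h3
  exact h3.symm

/-- Determination of the connection form: if `A - P A = -W` and `A - Q A = -W'` for
orthogonal projections `P, Q` onto `M, N`, and `R` is the orthogonal projection onto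
`M ∩ N`, then `(1 + R - PQ)((1 - R)A) = -(W + P W')` and
`(1 + R - QP)((1 - R)A) = -(W' + Q W)`; consequently, if `M + N` is closed, `(1 - R)A`
is obtained by applying the inverses of `1 + R - PQ` resp. `1 + R - QP`. -/
theorem stmt_15 {H : Type*} [NormedAddCommGroup H] [InnerProductSpace ℂ H] [CompleteSpace H]
    (M N : Submodule ℂ H) (P Q R : H →L[ℂ] H)
    (hP : ∀ x : H, P x ∈ M ∧ x - P x ∈ Mᗮ)
    (hQ : ∀ x : H, Q x ∈ N ∧ x - Q x ∈ Nᗮ)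
    (hR : ∀ x : H, R x ∈ M ⊓ N ∧ x - R x ∈ (M ⊓ N)ᗮ)
    (A W W' : H) (hA1 : A - P A = -W) (hA2 : A - Q A = -W') :
    (1 + R - P * Q) (A - R A) = -(W + P W') ∧
    (1 + R - Q * P) (A - R A) = -(W' + Q W) ∧
    (IsClosed ((M ⊔ N : Submodule ℂ H) : Set H) →
      ∀ T T' : H →L[ℂ] H,
        T * (1 + R - P * Q) = 1 → T' * (1 + R - Q * P) = 1 →
        A - R A = -(T (W + P W')) ∧ A - R A = -(T' (W' + Q W))) := by
  have hRA : R A ∈ M ⊓ N := (hR A).1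
  have hRR : R (R A) = R A := proj_fix hR hRA
  have hPR : P (R A) = R A := proj_fix hP hRA.1
  have hQR : Q (R A) = R A := proj_fix hQ hRA.2
  have hPA : P A = A + W := by
    linear_combination (norm := module) -hA1
  have hQA : Q A = A + W' := by
    linear_combination (norm := module) -hA2
  have e1 : (1 + R - P * Q) (A - R A) = -(W + P W') := by
    simp only [ContinuousLinearMap.sub_apply, ContinuousLinearMap.add_apply,
      ContinuousLinearMap.one_apply, ContinuousLinearMap.mul_apply, map_sub, hRR, hQR, hQA,
      map_add, hPA, hPR]
    abel
  have e2 : (1 + R - Q * P) (A - R A) = -(W' + Q W) := by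
    simp only [ContinuousLinearMap.sub_apply, ContinuousLinearMap.add_apply,
      ContinuousLinearMap.one_apply, ContinuousLinearMap.mul_apply, map_sub, hRR, hPR, hPA,
      map_add, hQA, hQR]
    abel
  refine ⟨e1, e2, fun _ T T' hT hT' => ?_⟩
  constructor
  · have := congrArg (fun S : H →L[ℂ] H => S (A - R A)) hT
    simp only [ContinuousLinearMap.mul_apply, ContinuousLinearMap.one_apply, e1] at this
    rw [← this, map_neg]
  · have := congrArg (fun S : H →L[ℂ] H => S (A - R A)) hT'
    simp only [ContinuousLinearMap.mul_apply, ContinuousLinearMap.one_apply, e2] at this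
    rw [← this, map_neg]
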